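/- Let S be a set, σ a homogeneous braiding symbol over S with associated decorated rooted tree T(σ), and w = (s₁^{ε₁}, …, s_n^{ε_n}) a word over S. Call a function c from the vertices of T(σ) to {1,…,n} a proper configuration if for every pair of vertices u < v in the tree order one has c(u) ≤_w c(v). Then the letter-braiding value counts proper configurations: σ(w) = Σ over proper configurations c of ∏ over vertices v of T(σ) of ε_{c(v)}·h_v(s_{c(v)}), where h_v is the function decorating v. -/

import Mathlib

namespace Braiding

variable {S : Type*}

abbrev Word (S : Type*) := List (S × Bool)
def sgn (b : Bool) : ℚ := if b then 1 else -1
def epsAt (w : Word S) (j : ℕ) : Bool := (w[j]?.map Prod.snd).getD true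
def indD (h : S → ℚ) (w : Word S) (i : ℕ) : ℚ :=
  match w[i]? with
  | some (s, b) => sgn b * h s
  | none => 0
def leW (w : Word S) (i j : ℕ) : Prop :=
  if epsAt w j = true then i < j else i ≤ j
instance (w : Word S) (i j : ℕ) : Decidable (leW w i j) := by
  unfold leW; infer_instance
def cobound (w : Word S) (f : ℕ → ℚ) (j : ℕ) : ℚ :=
  ∑ i ∈ Finset.range w.length, if leW w i j then f i else 0
def braidMul (w : Word S) (f g : ℕ → ℚ) (j : ℕ) : ℚ := cobound w f j * g j
def integ (w : Word S) (f : ℕ → ℚ) : ℚ := ∑ i ∈ Finset.range w.length, f i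

inductive HSymbol (S : Type*) where
  | leaf : (S → ℚ) → HSymbol S
  | node : HSymbol S → HSymbol S → HSymbol S

namespace HSymbol

def weight : HSymbol S → ℕ
  | leaf _ => 1
  | node α β => weight α + weight β

def dfun (w : Word S) : HSymbol S → ℕ → ℚ
  | leaf h => indD h w
  | node α β => braidMul w (dfun w α) (dfun w β)

def value (σ : HSymbol S) (w : Word S) : ℚ := integ w (σ.dfun w)

/-- The vertex set of the rooted tree `T(σ)` of a homogeneous braiding symbol:
a leaf symbol has a single vertex; for `⌊α⌉β` the tree of `α` is grafted onto the
root of the tree of `β`. -/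
def Vertex : HSymbol S → Type
  | leaf _ => Unit
  | node α β => Vertex α ⊕ Vertex β

def vDecEq : (σ : HSymbol S) → DecidableEq (Vertex σ)
  | leaf _ => inferInstanceAs (DecidableEq Unit)
  | node α β =>
      letI := vDecEq α
      letI := vDecEq β
      inferInstanceAs (DecidableEq (Vertex α ⊕ Vertex β))

instance (σ : HSymbol S) : DecidableEq (Vertex σ) := vDecEq σ

def vFintype : (σ : HSymbol S) → Fintype (Vertex σ)
  | leaf _ => inferInstanceAs (Fintype Unit)
  | node α β =>
      letI := vFintype α
      letI := vFintype β
      inferInstanceAs (Fintype (Vertex α ⊕ Vertex β))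

instance (σ : HSymbol S) : Fintype (Vertex σ) := vFintype σ

/-- The root of the tree `T(σ)`. -/
def root : (σ : HSymbol S) → Vertex σ
  | leaf _ => ()
  | node _ β => Sum.inr (root β)

/-- The decorating function `h_v : S → ℚ` at a vertex. -/
def dec : (σ : HSymbol S) → Vertex σ → (S → ℚ)
  | leaf h, _ => h
  | node α _, Sum.inl u => dec α u
  | node _ β, Sum.inr u => dec β u

/-- The strict tree order on `T(σ)`: `u < v` iff `u ≠ v` and `v` lies on the path
from `u` to the root. -/
def treeLT : (σ : HSymbol S) → Vertex σ → Vertex σ → Prop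
  | leaf _, _, _ => False
  | node α _, Sum.inl u, Sum.inl v => treeLT α u v
  | node _ β, Sum.inl _, Sum.inr v => v = root β
  | node _ _, Sum.inr _, Sum.inl _ => False
  | node _ β, Sum.inr u, Sum.inr v => treeLT β u v

def treeLTDec : (σ : HSymbol S) → (u v : Vertex σ) → Decidable (treeLT σ u v)
  | leaf _, _, _ => inferInstanceAs (Decidable False)
  | node α _, Sum.inl u, Sum.inl v => treeLTDec α u v
  | node _ β, Sum.inl _, Sum.inr v => inferInstanceAs (Decidable (v = root β))
  | node _ _, Sum.inr _, Sum.inl _ => inferInstanceAs (Decidable False)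
  | node _ β, Sum.inr u, Sum.inr v => treeLTDec β u v

instance (σ : HSymbol S) (u v : Vertex σ) : Decidable (treeLT σ u v) := treeLTDec σ u v

end HSymbol

section Aux
open HSymbol

lemma leW_le {w : Word S} {i j : ℕ} (h : leW w i j) : i ≤ j := by
  unfold leW at h; split at h <;> omega

lemma leW_trans {w : Word S} {i j k : ℕ} (h1 : leW w i j) (h2 : leW w j k) :
    leW w i k := by
  have hij := leW_le h1
  unfold leW at h2 ⊢
  split at h2 <;> simp_all <;> omega

lemma treeLT_root : ∀ (σ : HSymbol S) (u : Vertex σ), u ≠ root σ → treeLT σ u (root σ)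
  | HSymbol.leaf _, _, hu => absurd rfl hu
  | HSymbol.node _ β, Sum.inl _, _ => rfl
  | HSymbol.node _ β, Sum.inr u, hu =>
      treeLT_root β u (fun h => hu (by rw [h]; rfl))

lemma mul_ite_zero (p q : Prop) [Decidable p] [Decidable q] (x y : ℚ) :
    (if p then x else 0) * (if q then y else 0) = if p ∧ q then x * y else 0 := by
  split_ifs <;> simp_all

lemma dfun_eq_sum (σ : HSymbol S) (w : Word S) (j : Fin w.length) :
    σ.dfun w j = ∑ c ∈ Finset.univ.filter
        (fun c : Vertex σ → Fin w.length =>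
          (∀ u v : Vertex σ, treeLT σ u v → leW w (c u) (c v)) ∧ c (σ.root) = j),
      ∏ v : Vertex σ, sgn (w.get (c v)).2 * σ.dec v (w.get (c v)).1 := by
  induction σ generalizing j with
  | leaf h =>
    have hget : w[(j:ℕ)]? = some (w.get j) := by
      rw [List.getElem?_eq_getElem j.isLt]; rfl
    rw [Finset.sum_filter]
    show indD h w j = ∑ c : Unit → Fin w.length,
      if ((∀ u v : Vertex (HSymbol.leaf h), treeLT (HSymbol.leaf h) u v → leW w (c u) (c v)) ∧ c () = j)
        then ∏ v : Unit, sgn (w.get (c v)).2 * h (w.get (c v)).1 else 0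
    rw [Fintype.sum_eq_single (fun _ : Unit => j) (fun c hc => by
      rw [if_neg]
      rintro ⟨-, hcj⟩
      exact hc (funext fun u => hcj))]
    rw [if_pos ⟨fun u v hf => hf.elim, rfl⟩]
    simp [indD, hget]
  | node α β ihα ihβ =>
    classical
    set Fα : (Vertex α → Fin w.length) → ℚ :=
      fun a => ∏ v, sgn (w.get (a v)).2 * α.dec v (w.get (a v)).1 with hFα
    set Fβ : (Vertex β → Fin w.length) → ℚ :=
      fun b => ∏ v, sgn (w.get (b v)).2 * β.dec v (w.get (b v)).1 with hFβ
    set Qα : (Vertex α → Fin w.length) → Prop :=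
      fun a => ∀ u v, treeLT α u v → leW w (a u) (a v) with hQα
    set Qβ : (Vertex β → Fin w.length) → Prop :=
      fun b => ∀ u v, treeLT β u v → leW w (b u) (b v) with hQβ
    have hL : (HSymbol.node α β).dfun w j
        = (∑ i : Fin w.length, if leW w i j then α.dfun w i else 0) * β.dfun w j := by
      show cobound w (α.dfun w) j * β.dfun w j = _
      rw [cobound, ← Fin.sum_univ_eq_sum_range]
    rw [hL]
    have hα : ∀ i : Fin w.length, α.dfun w i
        = ∑ a : Vertex α → Fin w.length, if Qα a ∧ a (root α) = i then Fα a else 0 := by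
      intro i; rw [ihα i, Finset.sum_filter]
    have hβ : β.dfun w j
        = ∑ b : Vertex β → Fin w.length, if Qβ b ∧ b (root β) = j then Fβ b else 0 := by
      rw [ihβ j, Finset.sum_filter]
    rw [hβ]
    have hsum1 : (∑ i : Fin w.length, if leW w i j then α.dfun w i else 0)
        = ∑ a : Vertex α → Fin w.length,
            if Qα a ∧ leW w (a (root α)) j then Fα a else 0 := by
      have step : ∀ i : Fin w.length, (if leW w i j then α.dfun w i else 0)
          = ∑ a : Vertex α → Fin w.length,
              if a (root α) = i then (if Qα a ∧ leW w i j then Fα a else 0) else 0 := by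
        intro i
        split_ifs with hle
        · rw [hα i]
          refine Finset.sum_congr rfl fun a _ => ?_
          by_cases hr : a (root α) = i
          · simp [hr, hle]
          · simp [hr]
        · refine (Finset.sum_eq_zero fun a _ => ?_).symm
          by_cases hr : a (root α) = i
          · simp [hr, hle]
          · simp [hr]
      rw [Finset.sum_congr rfl fun i _ => step i, Finset.sum_comm]
      refine Finset.sum_congr rfl fun a _ => ?_
      rw [Finset.sum_ite_eq]
      simp
    rw [hsum1, Finset.sum_mul_sum]
    rw [Finset.sum_filter]
    refine Eq.trans ?_ (Equiv.sum_comp (Equiv.sumArrowEquivProdArrow (Vertex α) (Vertex β)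
      (Fin w.length)).symm _)
    rw [Fintype.sum_prod_type]
    refine Finset.sum_congr rfl fun a _ => Finset.sum_congr rfl fun b _ => ?_
    have he : (Equiv.sumArrowEquivProdArrow (Vertex α) (Vertex β) (Fin w.length)).symm (a, b)
        = (Sum.elim a b : Vertex (HSymbol.node α β) → Fin w.length) := rfl
    rw [he, mul_ite_zero]
    set cab : Vertex (HSymbol.node α β) → Fin w.length := Sum.elim a b with hcab
    have hcond : ((∀ u v : Vertex (HSymbol.node α β),
          treeLT (HSymbol.node α β) u v → leW w (cab u) (cab v)) ∧
          cab (root (HSymbol.node α β)) = j)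
        ↔ ((Qα a ∧ leW w (a (root α)) j) ∧ (Qβ b ∧ b (root β) = j)) := by
      constructor
      · rintro ⟨hp, hr⟩
        have hrβ : b (root β) = j := hr
        have hroot : leW w (a (root α)) (b (root β)) :=
          hp (Sum.inl (root α)) (Sum.inr (root β)) rfl
        rw [hrβ] at hroot
        exact ⟨⟨fun u v huv => hp (Sum.inl u) (Sum.inl v) huv, hroot⟩,
          ⟨fun u v huv => hp (Sum.inr u) (Sum.inr v) huv, hrβ⟩⟩
      · rintro ⟨⟨ha, hra⟩, ⟨hb, hrb⟩⟩
        refine ⟨?_, hrb⟩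
        rintro (u | u) (v | v) huv
        · exact ha u v huv
        · have hv : v = root β := huv
          subst hv
          show leW w (a u) (b (root β))
          rw [hrb]
          by_cases hu : u = root α
          · subst hu; exact hra
          · exact leW_trans (ha u (root α) (treeLT_root α u hu)) hra
        · exact huv.elim
        · exact hb u v huv
    have hF : (∏ v : Vertex (HSymbol.node α β),
          sgn (w.get (cab v)).2 * (HSymbol.node α β).dec v (w.get (cab v)).1)
        = Fα a * Fβ b := by
      rw [hcab]
      exact (Fintype.prod_sum_type _).trans rfl
    rw [hF]
    exact if_congr hcond.symm rfl rfl

end Aux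

end Braiding

set_option maxHeartbeats 1000000 in
open Braiding Braiding.HSymbol in
/-- Letter-braiding values count proper configurations of the decorated
rooted tree `T(σ)` in the word `w`: a configuration `c` from the vertices of `T(σ)` to
positions of `w` is proper if `u < v` in the tree order implies `c(u) ≤_w c(v)`, and
`σ(w) = Σ_{proper c} Π_v ε_{c(v)} · h_v(s_{c(v)})`. -/
theorem letterBraiding_counts_proper_configurations {S : Type*}
    (σ : HSymbol S) (w : Word S) :
    σ.value w =
      ∑ c ∈ Finset.univ.filter
          (fun c : Vertex σ → Fin w.length =>
            ∀ u v : Vertex σ, treeLT σ u v → leW w (c u) (c v)),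
        ∏ v : Vertex σ, sgn (w.get (c v)).2 * σ.dec v (w.get (c v)).1 := by
  classical
  have h1 : σ.value w = ∑ j : Fin w.length, σ.dfun w j :=
    (Fin.sum_univ_eq_sum_range (σ.dfun w) w.length).symm
  rw [h1, Finset.sum_congr rfl fun j _ => Braiding.dfun_eq_sum σ w j]
  rw [← Finset.sum_fiberwise (Finset.univ.filter
      (fun c : Vertex σ → Fin w.length =>
        ∀ u v : Vertex σ, treeLT σ u v → leW w (c u) (c v)))
      (fun c => c (root σ))
      (fun c => ∏ v : Vertex σ, sgn (w.get (c v)).2 * σ.dec v (w.get (c v)).1)]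
  refine Finset.sum_congr rfl fun j _ => ?_
  rw [Finset.filter_filter]
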